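/- Suppose S_1,…,S_n are bounded operators on H_n and μ_{i,w} are complex scalars with S_i ξ_w = μ_{i,w} ξ_{wi} for all words w and all 1 ≤ i ≤ n. Then T_i S_j = S_j T_i for all 1 ≤ i, j ≤ n if and only if μ_{i,w} = μ_{i,e} · W(i,w) · W(e,w)^{-1} for every word w in F_n^+ and every 1 ≤ i ≤ n. -/

import Mathlib

noncomputable section

/-- Auxiliary recursion for the weight function: `W(u, []) = 1` and, reading the word
`w = i_k ⋯ i_1` as the list `[i_k, …, i_1]`,
`W(u, i :: w) = λ_{i, w·u} · W(u, w)`, so that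
`W(u, i_k⋯i_1) = λ_{i_1,u} · λ_{i_2, i_1 u} ⋯ λ_{i_k, i_{k-1}⋯i_1 u}`. -/
def Waux {n : ℕ} (lam : Fin n → FreeMonoid (Fin n) → ℝ) (u : FreeMonoid (Fin n)) :
    List (Fin n) → ℝ
  | [] => 1
  | i :: w => lam i (FreeMonoid.ofList w * u) * Waux lam u w

/-- The weight function `W : F_n^+ × F_n^+ → ℝ` associated to the weights `λ_{i,w}`. -/
def Wfun {n : ℕ} (lam : Fin n → FreeMonoid (Fin n) → ℝ) (u w : FreeMonoid (Fin n)) : ℝ :=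
  Waux lam u (FreeMonoid.toList w)

instance {n : ℕ} : DecidableEq (FreeMonoid (Fin n)) := Classical.decEq _

/-- `n`-variable Fock space `H_n = ℓ²(F_n^+)`. -/
abbrev Hn (n : ℕ) : Type := lp (fun _ : FreeMonoid (Fin n) => ℂ) 2

/-- The standard orthonormal basis vector `ξ_w` of `H_n`. -/
def xi {n : ℕ} (w : FreeMonoid (Fin n)) : Hn n := lp.single 2 w 1

lemma Waux_pos {n : ℕ} (lam : Fin n → FreeMonoid (Fin n) → ℝ)
    (hpos : ∀ i w, 0 < lam i w) (u : FreeMonoid (Fin n)) :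
    ∀ l : List (Fin n), 0 < Waux lam u l
  | [] => one_pos
  | i :: w => mul_pos (hpos _ _) (Waux_pos lam hpos u w)

lemma Wfun_pos {n : ℕ} (lam : Fin n → FreeMonoid (Fin n) → ℝ)
    (hpos : ∀ i w, 0 < lam i w) (u w : FreeMonoid (Fin n)) : 0 < Wfun lam u w :=
  Waux_pos lam hpos u _

lemma Wfun_cons {n : ℕ} (lam : Fin n → FreeMonoid (Fin n) → ℝ)
    (u w : FreeMonoid (Fin n)) (i : Fin n) :
    Wfun lam u (FreeMonoid.of i * w) = lam i (w * u) * Wfun lam u w := by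
  show Waux lam u (FreeMonoid.toList (FreeMonoid.of i * w)) = _
  rw [FreeMonoid.toList_of_mul]
  show lam i (FreeMonoid.ofList (FreeMonoid.toList w) * u) * _ = _
  rw [FreeMonoid.ofList_toList]
  rfl

set_option synthInstance.maxHeartbeats 1000000 in
instance instT2Hn {n : ℕ} : T2Space (Hn n) := inferInstance

lemma dense_span_xi {n : ℕ} :
    Dense (↑(Submodule.span ℂ (Set.range (xi (n := n)))) : Set (Hn n)) := by
  let b : HilbertBasis (FreeMonoid (Fin n)) ℂ (Hn n) := default
  have hb : ∀ w, b w = xi w := by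
    intro w
    rw [← b.repr_symm_single w]
    rfl
  have hrange : Set.range (xi (n := n)) = Set.range b := by
    ext x; constructor
    · rintro ⟨w, rfl⟩; exact ⟨w, hb w⟩
    · rintro ⟨w, rfl⟩; exact ⟨w, (hb w).symm⟩
  rw [hrange]
  rw [Submodule.dense_iff_topologicalClosure_eq_top]
  exact b.dense_span

/-- If `S_1, …, S_n` are bounded operators on `H_n` with
`S_i ξ_w = μ_{i,w} ξ_{wi}`, then `T_i S_j = S_j T_i` for all `i, j` if and only if
`μ_{i,w} = μ_{i,e} · W(i,w) · W(e,w)⁻¹` for every word `w` and every `i`. -/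
theorem commuting_iff_right_weights (n : ℕ) (hn : 2 ≤ n)
    (lam : Fin n → FreeMonoid (Fin n) → ℝ)
    (hpos : ∀ i w, 0 < lam i w) (hbdd : ∃ C : ℝ, ∀ i w, lam i w ≤ C)
    (T : Fin n → (Hn n →L[ℂ] Hn n))
    (hT : ∀ i w, T i (xi w) = (lam i w : ℂ) • xi (FreeMonoid.of i * w))
    (S : Fin n → (Hn n →L[ℂ] Hn n)) (mu : Fin n → FreeMonoid (Fin n) → ℂ)
    (hS : ∀ i w, S i (xi w) = mu i w • xi (w * FreeMonoid.of i)) :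
    (∀ i j, T i * S j = S j * T i) ↔
      (∀ i w, mu i w = mu i 1 * (Wfun lam (FreeMonoid.of i) w : ℂ) *
        ((Wfun lam 1 w : ℂ))⁻¹) := by
  have hW1 : ∀ w, (Wfun lam 1 w : ℂ) ≠ 0 := fun w => by
    exact_mod_cast (Wfun_pos lam hpos 1 w).ne'
  have hlam : ∀ i w, (lam i w : ℂ) ≠ 0 := fun i w => by
    exact_mod_cast (hpos i w).ne'
  -- the operator identity is equivalent to the scalar relation:
  have hrel : (∀ i j, T i * S j = S j * T i) ↔
      (∀ i j w, mu j w * (lam i (w * FreeMonoid.of j) : ℂ)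
        = (lam i w : ℂ) * mu j (FreeMonoid.of i * w)) := by
    constructor
    · intro hcomm i j w
      have h1 : (T i * S j) (xi w) = (S j * T i) (xi w) := by rw [hcomm i j]
      simp only [ContinuousLinearMap.mul_apply, hS, hT, map_smul, smul_smul] at h1
      have h2 := congrArg (fun f : Hn n => (f : ∀ _ : FreeMonoid (Fin n), ℂ)
        (FreeMonoid.of i * (w * FreeMonoid.of j))) h1
      simp only [lp.coeFn_smul, Pi.smul_apply, xi, smul_eq_mul] at h2
      rw [lp.single_apply_self] at h2
      rw [show FreeMonoid.of i * w * FreeMonoid.of j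
          = FreeMonoid.of i * (w * FreeMonoid.of j) from mul_assoc _ _ _,
        lp.single_apply_self] at h2
      simpa using h2
    · intro hrel i j
      apply ContinuousLinearMap.ext_on (dense_span_xi (n := n))
      rintro _ ⟨w, rfl⟩
      simp only [ContinuousLinearMap.mul_apply, hS, hT, map_smul, smul_smul]
      rw [show FreeMonoid.of i * w * FreeMonoid.of j
          = FreeMonoid.of i * (w * FreeMonoid.of j) from mul_assoc _ _ _]
      rw [hrel i j w]
  rw [hrel]
  constructor
  · intro hrel i w
    -- key: mu j w * W(1,w) = mu j 1 * W(of j, w), by induction on the word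
    have key : ∀ (j : Fin n) (l : List (Fin n)),
        mu j (FreeMonoid.ofList l) * (Wfun lam 1 (FreeMonoid.ofList l) : ℂ)
          = mu j 1 * (Wfun lam (FreeMonoid.of j) (FreeMonoid.ofList l) : ℂ) := by
      intro j l
      induction l with
      | nil => simp [Wfun, Waux]
      | cons a v ih =>
        have hcons : FreeMonoid.ofList (a :: v) = FreeMonoid.of a * FreeMonoid.ofList v := rfl
        rw [hcons, Wfun_cons, Wfun_cons, mul_one]
        have hr := hrel a j (FreeMonoid.ofList v)
        push_cast
        have hla := hlam a (FreeMonoid.ofList v)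
        field_simp at hr ⊢
        calc (lam a (FreeMonoid.ofList v) : ℂ) * mu j (FreeMonoid.of a * FreeMonoid.ofList v)
              * (Wfun lam 1 (FreeMonoid.ofList v) : ℂ)
            = (lam a (FreeMonoid.ofList v) : ℂ) * mu j (FreeMonoid.of a * FreeMonoid.ofList v)
              * (Wfun lam 1 (FreeMonoid.ofList v) : ℂ) := by ring
          _ = mu j (FreeMonoid.ofList v) * (lam a (FreeMonoid.ofList v * FreeMonoid.of j) : ℂ)
              * (Wfun lam 1 (FreeMonoid.ofList v) : ℂ) := by rw [← hr]
          _ = (lam a (FreeMonoid.ofList v * FreeMonoid.of j) : ℂ)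
              * (mu j (FreeMonoid.ofList v) * (Wfun lam 1 (FreeMonoid.ofList v) : ℂ)) := by ring
          _ = _ := by rw [ih]; ring
    have hw := key i (FreeMonoid.toList w)
    rw [FreeMonoid.ofList_toList] at hw
    rw [eq_mul_inv_iff_mul_eq₀ (hW1 w)]
    exact hw
  · intro hmu i j w
    have h1 := hmu j w
    have h2 := hmu j (FreeMonoid.of i * w)
    rw [Wfun_cons, Wfun_cons, mul_one] at h2
    have hW1w := hW1 w
    have hli := hlam i w
    rw [h1, h2]
    push_cast
    field_simp
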